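/- Let G be a group and K a field of characteristic 0 with algebraic closure K̄. Let ρ : G → GL_n(K̄) be a semisimple representation with irreducible decomposition ρ ≅ ρ₁ ⊕ ⋯ ⊕ ρ_r. Assume: (i) Tr ρ(g) ∈ K for every g ∈ G; (ii) there exists g₀ ∈ G such that the characteristic polynomial of ρ(g₀) has n distinct roots, all lying in K. Then for each i (1 ≤ i ≤ r) and every g ∈ G, the trace Tr ρ_i(g) lies in K. -/

import Mathlib

open Matrix Polynomial

section Aux

variable {α : Type*} [CommRing α]

lemma aux_aeval_units_conj {A : Type*} [Ring A] [Algebra α A] (u : Aˣ) (x : A) (p : α[X]) :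
    aeval ((u : A) * x * (↑u⁻¹ : A)) p = u * aeval x p * ↑u⁻¹ := by
  induction p using Polynomial.induction_on' with
  | add p q hp hq => rw [map_add, map_add, hp, hq, mul_add, add_mul]
  | monomial k c =>
    rw [aeval_monomial, aeval_monomial, Units.conj_pow]
    simp only [← mul_assoc]
    rw [Algebra.commutes c (u : A)]

lemma aux_aeval_blockDiagonal' {o : Type*} [Fintype o] [DecidableEq o] {m' : o → Type*}
    [∀ i, Fintype (m' i)] [∀ i, DecidableEq (m' i)]
    (B : ∀ i, Matrix (m' i) (m' i) α) (p : α[X]) :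
    aeval (blockDiagonal' B) p = blockDiagonal' (fun i => aeval (B i) p) := by
  induction p using Polynomial.induction_on' with
  | add p q hp hq =>
    have h1 : ((fun i => aeval (B i) p) + fun i => aeval (B i) q)
        = fun i => aeval (B i) (p + q) := by
      funext j
      exact (map_add (aeval (B j)) p q).symm
    rw [map_add, hp, hq, ← blockDiagonal'_add, h1]
  | monomial k c =>
    simp only [aeval_monomial]
    have h1 : (fun i => algebraMap α (Matrix (m' i) (m' i) α) c * B i ^ k) = c • B ^ k := by
      funext j
      rw [Pi.smul_apply, Pi.pow_apply, Algebra.algebraMap_eq_smul_one, smul_mul_assoc, one_mul]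
    rw [h1, blockDiagonal'_smul, blockDiagonal'_pow, Algebra.algebraMap_eq_smul_one,
      smul_mul_assoc, one_mul]

lemma aux_trace_reindex {n' m'' : Type*} [Fintype n'] [Fintype m''] (e : n' ≃ m'')
    (A : Matrix n' n' α) : (reindex e e A).trace = A.trace := by
  simp only [Matrix.trace, reindex_apply, diag, submatrix_apply]
  exact (Fintype.sum_equiv e _ _ (fun a => by simp)).symm

lemma aux_reindex_mul {n' m'' : Type*} [Fintype n'] [Fintype m''] (e : n' ≃ m'')
    (A B : Matrix n' n' α) :
    (reindex e e A) * (reindex e e B) = reindex e e (A * B) := by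
  simp only [reindex_apply]
  exact submatrix_mul_equiv A B e.symm e.symm e.symm

lemma aux_aeval_reindex {n' m'' : Type*} [Fintype n'] [DecidableEq n'] [Fintype m'']
    [DecidableEq m''] (e : n' ≃ m'') (A : Matrix n' n' α) (p : α[X]) :
    aeval (reindex e e A) p = reindex e e (aeval A p) := by
  have h := Polynomial.aeval_algHom_apply (Matrix.reindexAlgEquiv α α e).toAlgHom A p
  simpa [Matrix.reindexAlgEquiv_apply] using h

lemma aux_charpoly_units_conj {n' : Type*} [Fintype n'] [DecidableEq n']
    (u : (Matrix n' n' α)ˣ) (N : Matrix n' n' α) :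
    ((u : Matrix n' n' α) * N * (↑u⁻¹ : Matrix n' n' α)).charpoly = N.charpoly := by
  let φ : Matrix n' n' α →+* Matrix n' n' α[X] := (C : α →+* α[X]).mapMatrix
  let u' : (Matrix n' n' α[X])ˣ := Units.map φ.toMonoidHom u
  have hcm : charmatrix ((u : Matrix n' n' α) * N * (↑u⁻¹ : Matrix n' n' α)) =
      (u' : Matrix n' n' α[X]) * charmatrix N * (↑u'⁻¹ : Matrix n' n' α[X]) := by
    have hscalar : ∀ V : Matrix n' n' α[X], Matrix.scalar n' (X : α[X]) * V =
        V * Matrix.scalar n' (X : α[X]) :=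
      fun V => (Matrix.scalar_commute (X : α[X]) (fun r => Commute.all _ _) V).eq
    unfold charmatrix
    rw [mul_sub, sub_mul]
    congr 1
    · rw [← hscalar ((u' : Matrix n' n' α[X])), mul_assoc, u'.mul_inv, mul_one]
    · show _ = φ u * _ * φ ↑u⁻¹
      rw [_root_.map_mul φ, _root_.map_mul φ]
  rw [Matrix.charpoly, hcm, Matrix.det_units_conj, Matrix.charpoly]

lemma aux_charpoly_blockDiagonal' {o : Type*} [Fintype o] [LinearOrder o]
    {m' : o → Type*} [∀ i, Fintype (m' i)] [∀ i, DecidableEq (m' i)] [∀ i, Nonempty (m' i)]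
    (B : ∀ i, Matrix (m' i) (m' i) α) :
    (blockDiagonal' B).charpoly = ∏ i, (B i).charpoly := by
  rw [(blockTriangular_blockDiagonal' B).charpoly]
  have hblock : ∀ a : o,
      ((blockDiagonal' B).toSquareBlock Sigma.fst a).charpoly = (B a).charpoly := ?_
  · simp only [hblock]
    refine Finset.prod_subset (Finset.subset_univ _) fun x _ hx => ?_
    exact absurd (Finset.mem_image_of_mem Sigma.fst
      (Finset.mem_univ (⟨x, Classical.arbitrary _⟩ : Σ i, m' i))) hx
  intro a
  let σ : m' a ≃ {x : Σ i, m' i // x.1 = a} :=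
    { toFun := fun x => ⟨⟨a, x⟩, rfl⟩
      invFun := fun p => cast (congrArg m' p.2) p.1.2
      left_inv := fun x => rfl
      right_inv := fun p => by rcases p with ⟨⟨i, x⟩, h⟩; subst h; rfl }
  rw [← Matrix.charpoly_reindex σ.symm]
  congr 1
  ext x y
  simp only [reindex_apply, submatrix_apply, Equiv.symm_symm, Matrix.toSquareBlock_def]
  exact blockDiagonal'_apply_eq B a x y

lemma aux_blockDiagonal'_inst_irrel {o : Type*} {m' : o → Type*} {α : Type*} [Zero α]
    (h1 h2 : DecidableEq o) (B : ∀ i, Matrix (m' i) (m' i) α) :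
    @blockDiagonal' o m' m' α h1 _ B = @blockDiagonal' o m' m' α h2 _ B := by
  have h : h1 = h2 := funext fun a => funext fun b => Subsingleton.elim _ _
  rw [h]

lemma aux_prod_X_sub_C_dvd {F : Type*} [Field F] {ι : Type*}
    {s : Finset ι} {v : ι → F} (hv : Function.Injective v) {h : F[X]}
    (hr : ∀ k ∈ s, h.IsRoot (v k)) : (∏ k ∈ s, (X - C (v k))) ∣ h := by
  classical
  induction s using Finset.induction_on with
  | empty => simp
  | @insert a s ha ih =>
    rw [Finset.prod_insert ha]
    refine IsCoprime.mul_dvd ?_ ?_ ?_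
    · exact IsCoprime.prod_right fun b hb =>
        Polynomial.pairwise_coprime_X_sub_C hv (fun hab => ha (hab ▸ hb))
    · exact dvd_iff_isRoot.mpr (hr a (Finset.mem_insert_self a s))
    · exact ih fun k hk => hr k (Finset.mem_insert_of_mem hk)

end Aux

/-- A matrix representation `ρ : G → GLₙ(F)` is *defined over* a subfield `E ⊆ F` if some
single conjugate of it has all matrix entries in `E`. -/
def MatRep.IsDefinedOver {G : Type*} [Group G] {F : Type*} [Field F] {ι : Type*}
    [Fintype ι] [DecidableEq ι]
    (ρ : G →* Matrix.GeneralLinearGroup ι F) (E : Subfield F) : Prop :=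
  ∃ M : Matrix.GeneralLinearGroup ι F,
    ∀ (g : G) (i j : ι),
      ((M * ρ g * M⁻¹ : Matrix.GeneralLinearGroup ι F) : Matrix ι ι F) i j ∈ E

/-- A matrix representation is *irreducible* if the underlying space is nonzero and the only
`G`-invariant subspaces (for the `mulVec` action) are `⊥` and `⊤`. -/
def MatRep.IsIrreducible {G : Type*} [Group G] {F : Type*} [Field F] {ι : Type*}
    [Fintype ι] [DecidableEq ι]
    (ρ : G →* Matrix.GeneralLinearGroup ι F) : Prop :=
  Nonempty ι ∧
    ∀ p : Submodule F (ι → F),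
      (∀ g : G, ∀ v ∈ p, ((ρ g : Matrix ι ι F)).mulVec v ∈ p) → p = ⊥ ∨ p = ⊤

/-- **Lemma (traces of each irreducible component are `K`-rational).**
If `ρ : G → GLₙ(K̄)` decomposes (up to conjugation) as a direct sum of irreducible
representations `ρ₁ ⊕ ⋯ ⊕ ρᵣ`, all traces of `ρ` lie in `K`, and some `ρ(g₀)` has
characteristic polynomial with `n` distinct roots all lying in `K`, then all the traces of each
component `ρᵢ` also lie in `K`. -/
theorem component_traces_mem_base
    {G : Type*} [Group G] {K : Type*} [Field K] [CharZero K] {n r : ℕ}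
    (ρ : G →* Matrix.GeneralLinearGroup (Fin n) (AlgebraicClosure K))
    (m : Fin r → ℕ)
    (ρi : (i : Fin r) → G →* Matrix.GeneralLinearGroup (Fin (m i)) (AlgebraicClosure K))
    (hirr : ∀ i, MatRep.IsIrreducible (ρi i))
    (e : (Σ i : Fin r, Fin (m i)) ≃ Fin n)
    (M : Matrix.GeneralLinearGroup (Fin n) (AlgebraicClosure K))
    (hdecomp : ∀ g : G,
      (ρ g : Matrix (Fin n) (Fin n) (AlgebraicClosure K)) =
        (M : Matrix (Fin n) (Fin n) (AlgebraicClosure K)) *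
          (Matrix.reindex e e
            (Matrix.blockDiagonal' fun i =>
              ((ρi i g : Matrix (Fin (m i)) (Fin (m i)) (AlgebraicClosure K))))) *
          ((M⁻¹ : Matrix.GeneralLinearGroup (Fin n) (AlgebraicClosure K)) :
            Matrix (Fin n) (Fin n) (AlgebraicClosure K)))
    (htr : ∀ g : G,
      (ρ g : Matrix (Fin n) (Fin n) (AlgebraicClosure K)).trace ∈
        (algebraMap K (AlgebraicClosure K)).fieldRange)
    (g₀ : G)
    (hg₀ : ∃ roots : Fin n → AlgebraicClosure K, Function.Injective roots ∧
      (∀ i, roots i ∈ (algebraMap K (AlgebraicClosure K)).fieldRange) ∧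
      (ρ g₀ : Matrix (Fin n) (Fin n) (AlgebraicClosure K)).charpoly =
        ∏ i, (X - C (roots i))) :
    ∀ (i : Fin r) (g : G),
      (ρi i g : Matrix (Fin (m i)) (Fin (m i)) (AlgebraicClosure K)).trace ∈
        (algebraMap K (AlgebraicClosure K)).fieldRange := by
  classical
  obtain ⟨ro, hroinj, hromem, hcp⟩ := hg₀
  intro i g
  haveI hNE : ∀ j, Nonempty (Fin (m j)) := fun j => (hirr j).1
  set p : Polynomial (AlgebraicClosure K) := ∏ k, (X - C (ro k)) with hpdef
  have hpmonic : p.Monic := monic_prod_of_monic _ _ fun k _ => monic_X_sub_C _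
  have hp0 : p ≠ 0 := hpmonic.ne_zero
  -- the characteristic polynomial of the block diagonal form
  have hcpN : (blockDiagonal' fun j =>
      ((ρi j g₀ : Matrix (Fin (m j)) (Fin (m j)) (AlgebraicClosure K)))).charpoly = p := by
    rw [← Matrix.charpoly_reindex e, ← aux_charpoly_units_conj M, ← hdecomp g₀, hcp]
  have hprod : (∏ j, ((ρi j g₀ : Matrix (Fin (m j)) (Fin (m j)) (AlgebraicClosure K))).charpoly)
      = p := by
    rw [← hcpN]
    have key := aux_charpoly_blockDiagonal'
      (fun j => ((ρi j g₀ : Matrix (Fin (m j)) (Fin (m j)) (AlgebraicClosure K))))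
    rw [← key]
  -- roots of p
  have hproots : p.roots = Finset.univ.val.map ro := by
    have h1 : p = ((Finset.univ.val.map ro).map fun a => X - C a).prod := by
      rw [hpdef, Multiset.map_map]
      rfl
    rw [h1, roots_multiset_prod_X_sub_C]
  have hnodup : (Finset.univ.val.map ro).Nodup := Finset.univ.nodup.map hroinj
  have hpnodup : p.roots.Nodup := by rw [hproots]; exact hnodup
  -- each block's charpoly divides p
  have hdvd : ∀ j, ((ρi j g₀ : Matrix (Fin (m j)) (Fin (m j)) (AlgebraicClosure K))).charpoly ∣ p :=
    fun j => hprod ▸ Finset.dvd_prod_of_mem _ (Finset.mem_univ j)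
  -- the set of indices of eigenvalues of each block
  set S : Fin r → Finset (Fin n) := fun j => Finset.univ.filter fun k =>
    ((ρi j g₀ : Matrix (Fin (m j)) (Fin (m j)) (AlgebraicClosure K))).charpoly.IsRoot (ro k)
    with hSdef
  have hroots : ∀ j,
      ((ρi j g₀ : Matrix (Fin (m j)) (Fin (m j)) (AlgebraicClosure K))).charpoly.roots
        = (S j).val.map ro := by
    intro j
    have hle := Polynomial.roots.le_of_dvd hp0 (hdvd j)
    have hnd : ((ρi j g₀ : Matrix (Fin (m j)) (Fin (m j)) (AlgebraicClosure K))).charpoly.roots.Nodup :=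
      Multiset.nodup_of_le hle hpnodup
    refine (Multiset.Nodup.ext hnd (Multiset.Nodup.map hroinj (S j).nodup)).mpr fun a => ?_
    constructor
    · intro ha
      have hap : a ∈ p.roots := Multiset.mem_of_le hle ha
      rw [hproots] at hap
      obtain ⟨k, -, rfl⟩ := Multiset.mem_map.mp hap
      refine Multiset.mem_map.mpr ⟨k, ?_, rfl⟩
      rw [Finset.mem_val, hSdef, Finset.mem_filter]
      exact ⟨Finset.mem_univ k, (Polynomial.mem_roots'.mp ha).2⟩
    · intro ha
      obtain ⟨k, hk, rfl⟩ := Multiset.mem_map.mp ha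
      rw [Finset.mem_val, hSdef, Finset.mem_filter] at hk
      exact Polynomial.mem_roots'.mpr ⟨(Matrix.charpoly_monic _).ne_zero, hk.2⟩
  -- each block's charpoly is a product of distinct linear factors
  have hcpB : ∀ j, ((ρi j g₀ : Matrix (Fin (m j)) (Fin (m j)) (AlgebraicClosure K))).charpoly
      = ∏ k ∈ S j, (X - C (ro k)) := by
    intro j
    have hpsplits : p.Splits := by
      rw [hpdef]
      exact Splits.prod fun k _ => Splits.X_sub_C _
    have hsp := Splits.of_dvd hpsplits hp0 (hdvd j)
    have h2 := Splits.eq_prod_roots_of_monic hsp (Matrix.charpoly_monic _)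
    rw [h2, hroots j, Multiset.map_map]
    rfl
  -- disjointness of the eigenvalue sets
  have hdisj : ∀ j j', j ≠ j' → ∀ k, k ∈ S j → k ∉ S j' := by
    intro j j' hjj' k hkj hkj'
    have d1 : (X - C (ro k)) ∣
        ((ρi j g₀ : Matrix (Fin (m j)) (Fin (m j)) (AlgebraicClosure K))).charpoly := by
      rw [hcpB j]; exact Finset.dvd_prod_of_mem _ hkj
    have d2 : (X - C (ro k)) ∣
        ((ρi j' g₀ : Matrix (Fin (m j')) (Fin (m j')) (AlgebraicClosure K))).charpoly := by
      rw [hcpB j']; exact Finset.dvd_prod_of_mem _ hkj'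
    have hmul : ((ρi j g₀ : Matrix (Fin (m j)) (Fin (m j)) (AlgebraicClosure K))).charpoly *
        ((ρi j' g₀ : Matrix (Fin (m j')) (Fin (m j')) (AlgebraicClosure K))).charpoly ∣ p := by
      have h2 : ∏ x ∈ ({j, j'} : Finset (Fin r)),
          ((ρi x g₀ : Matrix (Fin (m x)) (Fin (m x)) (AlgebraicClosure K))).charpoly ∣
          ∏ x, ((ρi x g₀ : Matrix (Fin (m x)) (Fin (m x)) (AlgebraicClosure K))).charpoly :=
        Finset.prod_dvd_prod_of_subset _ _ _ (Finset.subset_univ _)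
      rw [Finset.prod_pair hjj'] at h2
      rw [← hprod]
      exact h2
    have hsq : (X - C (ro k)) ^ 2 ∣ p := by
      rw [sq]
      exact dvd_trans (mul_dvd_mul d1 d2) hmul
    have h2le : 2 ≤ p.rootMultiplicity (ro k) := by
      rw [Polynomial.le_rootMultiplicity_iff hp0]
      exact hsq
    have hcount : p.roots.count (ro k) = 1 := by
      rw [hproots, Multiset.count_map_eq_count' ro _ hroinj]
      exact Multiset.count_eq_one_of_mem Finset.univ.nodup (Finset.mem_univ k)
    rw [Polynomial.count_roots] at hcount
    omega
  -- pick preimages of the roots in K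
  have hromem' : ∀ k, ∃ a : K, algebraMap K (AlgebraicClosure K) a = ro k :=
    fun k => RingHom.mem_fieldRange.mp (hromem k)
  choose rk hrk using hromem'
  have hrkinj : Function.Injective rk := fun a b hab => by
    apply hroinj
    rw [← hrk a, ← hrk b, hab]
  -- the interpolation polynomial over K
  set q : Polynomial K := ∑ k ∈ S i, Lagrange.basis Finset.univ rk k with hq
  set f : Polynomial (AlgebraicClosure K) := q.map (algebraMap K (AlgebraicClosure K)) with hfdef
  have heval : ∀ k : Fin n, f.eval (ro k) = if k ∈ S i then 1 else 0 := by
    intro k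
    rw [hfdef, ← hrk k, eval_map, Polynomial.eval₂_at_apply, hq, Polynomial.eval_finset_sum]
    by_cases hk : k ∈ S i
    · rw [Finset.sum_eq_single k]
      · rw [Lagrange.eval_basis_self hrkinj.injOn (Finset.mem_univ k), if_pos hk, _root_.map_one]
      · intro b _ hbk
        exact Lagrange.eval_basis_of_ne hbk (Finset.mem_univ k)
      · intro hki
        exact absurd hk hki
    · rw [if_neg hk, Finset.sum_eq_zero, _root_.map_zero]
      intro b hb
      exact Lagrange.eval_basis_of_ne (fun hbk => hk (hbk ▸ hb)) (Finset.mem_univ k)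
  -- Cayley-Hamilton consequences
  have haevali : aeval ((ρi i g₀ : Matrix (Fin (m i)) (Fin (m i)) (AlgebraicClosure K))) f = 1 := by
    have hdvd1 : ((ρi i g₀ : Matrix (Fin (m i)) (Fin (m i)) (AlgebraicClosure K))).charpoly
        ∣ f - 1 := by
      rw [hcpB i]
      refine aux_prod_X_sub_C_dvd hroinj fun k hk => ?_
      show (f - 1).eval (ro k) = 0
      rw [Polynomial.eval_sub, Polynomial.eval_one, heval k, if_pos hk, sub_self]
    obtain ⟨c, hc⟩ := hdvd1
    have h0 : aeval ((ρi i g₀ : Matrix (Fin (m i)) (Fin (m i)) (AlgebraicClosure K))) (f - 1)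
        = 0 := by
      rw [hc, _root_.map_mul, Matrix.aeval_self_charpoly, zero_mul]
    rw [_root_.map_sub, _root_.map_one, sub_eq_zero] at h0
    exact h0
  have haevalj : ∀ j, j ≠ i →
      aeval ((ρi j g₀ : Matrix (Fin (m j)) (Fin (m j)) (AlgebraicClosure K))) f = 0 := by
    intro j hj
    have hdvd0 : ((ρi j g₀ : Matrix (Fin (m j)) (Fin (m j)) (AlgebraicClosure K))).charpoly
        ∣ f := by
      rw [hcpB j]
      refine aux_prod_X_sub_C_dvd hroinj fun k hk => ?_
      show f.eval (ro k) = 0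
      rw [heval k, if_neg (hdisj j i hj k hk)]
    obtain ⟨c, hc⟩ := hdvd0
    rw [hc, _root_.map_mul, Matrix.aeval_self_charpoly, zero_mul]
  -- the trace computation
  have hcomb : ∀ Xm Ym : Matrix (Fin n) (Fin n) (AlgebraicClosure K),
      ((M : Matrix (Fin n) (Fin n) (AlgebraicClosure K)) * Xm *
          ((M⁻¹ : Matrix.GeneralLinearGroup (Fin n) (AlgebraicClosure K)) :
            Matrix (Fin n) (Fin n) (AlgebraicClosure K))) *
        ((M : Matrix (Fin n) (Fin n) (AlgebraicClosure K)) * Ym *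
          ((M⁻¹ : Matrix.GeneralLinearGroup (Fin n) (AlgebraicClosure K)) :
            Matrix (Fin n) (Fin n) (AlgebraicClosure K))) =
      (M : Matrix (Fin n) (Fin n) (AlgebraicClosure K)) * (Xm * Ym) *
        ((M⁻¹ : Matrix.GeneralLinearGroup (Fin n) (AlgebraicClosure K)) :
          Matrix (Fin n) (Fin n) (AlgebraicClosure K)) := by
    intro Xm Ym
    simp only [mul_assoc]
    congr 2
    rw [← mul_assoc, M.inv_mul, one_mul]
  have hAtrace : Matrix.trace
      (aeval ((ρ g₀ : Matrix (Fin n) (Fin n) (AlgebraicClosure K))) f *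
        (ρ g : Matrix (Fin n) (Fin n) (AlgebraicClosure K))) =
      ((ρi i g : Matrix (Fin (m i)) (Fin (m i)) (AlgebraicClosure K))).trace := by
    rw [hdecomp g₀, hdecomp g, aux_aeval_units_conj M, hcomb, Matrix.trace_units_conj,
      aux_aeval_reindex, aux_reindex_mul, aux_trace_reindex, aux_aeval_blockDiagonal',
      ← Matrix.blockDiagonal'_mul, Matrix.trace_blockDiagonal']
    rw [Finset.sum_eq_single i]
    · rw [haevali, one_mul]
    · intro b _ hbi
      rw [haevalj b hbi, zero_mul, Matrix.trace_zero]
    · intro hi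
      exact absurd (Finset.mem_univ i) hi
  -- membership of the trace in the base field
  have hTmem : Matrix.trace
      (aeval ((ρ g₀ : Matrix (Fin n) (Fin n) (AlgebraicClosure K))) f *
        (ρ g : Matrix (Fin n) (Fin n) (AlgebraicClosure K))) ∈
      (algebraMap K (AlgebraicClosure K)).fieldRange := by
    rw [hfdef, Polynomial.aeval_map_algebraMap, Polynomial.aeval_eq_sum_range, Finset.sum_mul,
      Matrix.trace_sum]
    refine sum_mem fun k _ => ?_
    rw [smul_mul_assoc, Matrix.trace_smul]
    have hmat : ((ρ g₀ : Matrix (Fin n) (Fin n) (AlgebraicClosure K))) ^ k *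
        (ρ g : Matrix (Fin n) (Fin n) (AlgebraicClosure K)) =
        ((ρ (g₀ ^ k * g) : Matrix (Fin n) (Fin n) (AlgebraicClosure K))) := by
      simp only [_root_.map_mul, _root_.map_pow, Units.val_mul, Units.val_pow_eq_pow_val]
    rw [hmat, Algebra.smul_def]
    exact mul_mem (RingHom.mem_fieldRange.mpr ⟨q.coeff k, rfl⟩) (htr (g₀ ^ k * g))
  exact hAtrace ▸ hTmem
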